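/- arXiv:1907.02717 — 3 statements merged into one kernel-verified Lean document; each statement's English description precedes it below -/
import Mathlib

section
/- Consider a weighted undirected graph on vertex set V = X₁ ∪ X₂ ∪ X₃ (disjoint, with |X₁| = N₁, |X₂| = N₂, |X₃| = N₃, all positive), where there are no edges between X₁ and X₃. Suppose every vertex has at most q neighbors and every edge weight is at most w_max. Then the algebraic connectivity (second-smallest Laplacian eigenvalue) satisfies λ₂ ≤ q·w_max·(N₃²N₂ + N₁²N₂)/(N₃²N₁ + N₁²N₃). -/
open Matrix

/-- Sorted (ascending) eigenvalues of a Hermitian matrix. -/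
noncomputable def sortedEig {N : ℕ} {L : Matrix (Fin N) (Fin N) ℝ}
    (hL : L.IsHermitian) : Fin N → ℝ :=
  hL.eigenvalues ∘ Tuple.sort hL.eigenvalues

/-- Weighted graph Laplacian. -/
noncomputable def lap {N : ℕ} (w : Fin N → Fin N → ℝ) : Matrix (Fin N) (Fin N) ℝ :=
  Matrix.of fun i j => if i = j then ∑ k, w i k else - w i j

lemma spectral {N : ℕ} (hN : 2 ≤ N) {L : Matrix (Fin N) (Fin N) ℝ} (hL : L.IsHermitian)
    (v : Fin N → ℝ) (hv1 : ∑ i, v i = 0) (hL1 : L *ᵥ (fun _ => (1:ℝ)) = 0) :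
    sortedEig hL ⟨1, by omega⟩ ≤ 0 ∨
      sortedEig hL ⟨1, by omega⟩ * (v ⬝ᵥ v) ≤ v ⬝ᵥ (L *ᵥ v) := by
  classical
  set B := hL.eigenvectorBasis with hB
  set eig := hL.eigenvalues with heig
  set σ := Tuple.sort eig with hσ
  set μ1 := sortedEig hL ⟨1, by omega⟩ with hμ1
  have hμ1def : μ1 = eig (σ ⟨1, by omega⟩) := rfl
  set u : Fin N → Fin N → ℝ := fun j => ⇑(B j) with hu
  have hinner : ∀ x y : EuclideanSpace ℝ (Fin N), (inner ℝ x y : ℝ) = (fun k => x k) ⬝ᵥ (fun k => y k) := by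
    intro x y
    simp [PiLp.inner_apply, RCLike.inner_apply, dotProduct, mul_comm]
  have hLsymm : Lᵀ = L := by
    have := hL.eq
    rwa [conjTranspose_eq_transpose_of_trivial] at this
  have hvm : ∀ z : Fin N → ℝ, z ᵥ* L = L *ᵥ z := by
    intro z
    nth_rewrite 1 [← hLsymm]
    exact vecMul_transpose L z
  have hue : ∀ i, L *ᵥ u i = eig i • u i := fun i => hL.mulVec_eigenvectorBasis i
  have hudot : ∀ i (x : Fin N → ℝ), u i ⬝ᵥ (L *ᵥ x) = eig i * (u i ⬝ᵥ x) := by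
    intro i x
    rw [dotProduct_mulVec, hvm, hue, smul_dotProduct, smul_eq_mul]
  -- expansion
  have hexp : ∀ x y : Fin N → ℝ,
      x ⬝ᵥ y = ∑ i, (u i ⬝ᵥ x) * (u i ⬝ᵥ y) := by
    intro x y
    have hsum := B.sum_repr' (WithLp.toLp 2 x : EuclideanSpace ℝ (Fin N))
    have hfun : ∀ k, x k = ∑ i, (u i ⬝ᵥ x) * u i k := by
      intro k
      have h1 := congrFun (congrArg (fun z : EuclideanSpace ℝ (Fin N) => (z : Fin N → ℝ)) hsum) k
      simp only [WithLp.ofLp_toLp] at h1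
      simp only [← h1]
      rw [show ((∑ i, (inner ℝ (B i) (WithLp.toLp 2 x : EuclideanSpace ℝ (Fin N)) : ℝ) • B i : EuclideanSpace ℝ (Fin N)) : Fin N → ℝ) k = ∑ i, (inner ℝ (B i) (WithLp.toLp 2 x : EuclideanSpace ℝ (Fin N)) : ℝ) * u i k from by
        rw [WithLp.ofLp_sum, Finset.sum_apply]; rfl]
      refine Finset.sum_congr rfl fun i _ => ?_
      rw [hinner]
    calc x ⬝ᵥ y = ∑ k, (∑ i, (u i ⬝ᵥ x) * u i k) * y k := by
          refine Finset.sum_congr rfl fun k _ => ?_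
          rw [← hfun k]
      _ = ∑ k, ∑ i, (u i ⬝ᵥ x) * u i k * y k := by simp only [Finset.sum_mul]
      _ = ∑ i, ∑ k, (u i ⬝ᵥ x) * u i k * y k := Finset.sum_comm
      _ = ∑ i, (u i ⬝ᵥ x) * (u i ⬝ᵥ y) := by
          refine Finset.sum_congr rfl fun i _ => ?_
          simp only [dotProduct, Finset.mul_sum]
          exact Finset.sum_congr rfl fun k _ => by ring
  have hzero : (0:ℕ) < N := by omega
  set o : Fin N := σ ⟨0, hzero⟩ with ho
  have key : ∀ x : Fin N → ℝ, u o ⬝ᵥ x = 0 → μ1 * (x ⬝ᵥ x) ≤ x ⬝ᵥ (L *ᵥ x) := by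
    intro x hxo
    have h1 : x ⬝ᵥ (L *ᵥ x) = ∑ i, eig i * (u i ⬝ᵥ x)^2 := by
      rw [hexp]
      refine Finset.sum_congr rfl fun i _ => ?_
      rw [hudot]; ring
    have h2 : x ⬝ᵥ x = ∑ i, (u i ⬝ᵥ x)^2 := by
      rw [hexp]
      exact Finset.sum_congr rfl fun i _ => by ring
    rw [h1, h2, Finset.mul_sum]
    refine Finset.sum_le_sum fun i _ => ?_
    by_cases hio : i = o
    · subst hio; rw [hxo]; simp
    · have hle1 : μ1 ≤ eig i := by
        have hne : σ.symm i ≠ ⟨0, hzero⟩ := by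
          intro h
          apply hio
          rw [ho, ← h, Equiv.apply_symm_apply]
        have hle : (⟨1, by omega⟩ : Fin N) ≤ σ.symm i := by
          have hpos : 0 < (σ.symm i : ℕ) := by
            rcases Nat.eq_zero_or_pos (σ.symm i : ℕ) with h0 | h0
            · exact absurd (Fin.ext h0) hne
            · exact h0
          exact hpos
        have hmono : Monotone (eig ∘ Tuple.sort eig) := Tuple.monotone_sort eig
        calc μ1 = (eig ∘ Tuple.sort eig) ⟨1, by omega⟩ := hμ1def
          _ ≤ (eig ∘ Tuple.sort eig) (σ.symm i) := hmono hle
          _ = eig i := by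
              rw [Function.comp_apply]
              show eig (σ (σ.symm i)) = eig i
              rw [Equiv.apply_symm_apply]
      nlinarith [sq_nonneg (u i ⬝ᵥ x)]
  by_cases hμ : μ1 ≤ 0
  · exact Or.inl hμ
  right
  push_neg at hμ
  set e : Fin N → ℝ := fun _ => 1 with he
  have hee : e ⬝ᵥ e = (N:ℝ) := by simp [he, dotProduct]
  have hev : e ⬝ᵥ v = 0 := by simpa [he, dotProduct] using hv1
  set a : ℝ := u o ⬝ᵥ e with ha
  set b : ℝ := u o ⬝ᵥ v with hbb
  by_cases haz : a = 0
  · exfalso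
    have hk := key e (by rw [← ha]; exact haz)
    rw [hee, hL1] at hk
    simp only [dotProduct_zero] at hk
    have hNpos : (0:ℝ) < (N:ℝ) := by positivity
    nlinarith
  · set x : Fin N → ℝ := b • e - a • v with hx
    have hxo : u o ⬝ᵥ x = 0 := by
      rw [hx, dotProduct_sub, dotProduct_smul, dotProduct_smul, smul_eq_mul, smul_eq_mul, ← ha, ← hbb]
      ring
    have hk := key x hxo
    have hLx : L *ᵥ x = -(a • (L *ᵥ v)) := by
      rw [hx, mulVec_sub, mulVec_smul, mulVec_smul, hL1]
      simp
    have heLv : e ⬝ᵥ (L *ᵥ v) = 0 := by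
      rw [dotProduct_mulVec, hvm, hL1, zero_dotProduct]
    have hxLx : x ⬝ᵥ (L *ᵥ x) = a^2 * (v ⬝ᵥ (L *ᵥ v)) := by
      rw [hLx, hx, sub_dotProduct, smul_dotProduct, smul_dotProduct]
      simp only [dotProduct_neg, dotProduct_smul, smul_eq_mul, heLv]
      ring
    have hxx : x ⬝ᵥ x = b^2 * (N:ℝ) + a^2 * (v ⬝ᵥ v) := by
      simp only [hx, sub_dotProduct, dotProduct_sub, smul_dotProduct,
        dotProduct_smul, smul_eq_mul, dotProduct_comm v e, hee, hev]
      ring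
    rw [hxLx, hxx] at hk
    have ha2 : 0 < a^2 := by positivity
    nlinarith [mul_nonneg hμ.le (mul_nonneg (sq_nonneg b) (show (0:ℝ) ≤ (N:ℝ) by positivity))]

lemma lap_mulVec {N : ℕ} (w : Fin N → Fin N → ℝ) (hdiag : ∀ i, w i i = 0)
    (v : Fin N → ℝ) (i : Fin N) :
    (lap w *ᵥ v) i = (∑ k, w i k) * v i - ∑ j, w i j * v j := by
  have : (lap w *ᵥ v) i = ∑ j, (if i = j then ∑ k, w i k else - w i j) * v j := rfl
  rw [this]
  have h2 : ∀ j, (if i = j then ∑ k, w i k else - w i j) * v j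
      = (if i = j then ((∑ k, w i k) + w i j) * v j else 0) + (- (w i j * v j)) := by
    intro j
    by_cases h : i = j
    · subst h; rw [if_pos rfl, if_pos rfl, hdiag]; ring
    · rw [if_neg h, if_neg h]; ring
  simp only [h2]
  rw [Finset.sum_add_distrib, Finset.sum_ite_eq (Finset.univ) i
      (fun j => ((∑ k, w i k) + w i j) * v j)]
  simp [hdiag i, Finset.sum_neg_distrib]
  ring

lemma lap_one {N : ℕ} (w : Fin N → Fin N → ℝ) (hdiag : ∀ i, w i i = 0) :
    lap w *ᵥ (fun _ => (1:ℝ)) = 0 := by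
  funext i
  rw [lap_mulVec w hdiag]
  simp

lemma quad_form {N : ℕ} (w : Fin N → Fin N → ℝ) (hdiag : ∀ i, w i i = 0) (v : Fin N → ℝ) :
    v ⬝ᵥ (lap w *ᵥ v) = ∑ i, ∑ j, w i j * (v i * (v i - v j)) := by
  unfold dotProduct
  refine Finset.sum_congr rfl fun i _ => ?_
  rw [lap_mulVec w hdiag, Finset.sum_mul, mul_sub, Finset.mul_sum, Finset.mul_sum,
    ← Finset.sum_sub_distrib]
  refine Finset.sum_congr rfl fun j _ => by ring

/-- Bottleneck bound: if the vertex set is partitioned into X₁, X₂, X₃ with no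
edges between X₁ and X₃, degrees at most q and weights at most w_max, then
λ₂ ≤ q·w_max·(N₃²N₂ + N₁²N₂)/(N₃²N₁ + N₁²N₃). -/
theorem stmt1 {N q : ℕ} (hN : 2 ≤ N) (wmax : ℝ)
    (w : Fin N → Fin N → ℝ)
    (hsym : ∀ i j, w i j = w j i) (hnn : ∀ i j, 0 ≤ w i j)
    (hdiag : ∀ i, w i i = 0)
    (hwmax : ∀ i j, w i j ≤ wmax)
    (hdeg : ∀ i, (Finset.univ.filter fun j => w i j ≠ 0).card ≤ q)
    (X₁ X₂ X₃ : Finset (Fin N))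
    (h12 : Disjoint X₁ X₂) (h13 : Disjoint X₁ X₃) (h23 : Disjoint X₂ X₃)
    (hcover : X₁ ∪ X₂ ∪ X₃ = Finset.univ)
    (hN1 : 0 < X₁.card) (hN2 : 0 < X₂.card) (hN3 : 0 < X₃.card)
    (hnoedge : ∀ i ∈ X₁, ∀ j ∈ X₃, w i j = 0)
    (hH : (lap w).IsHermitian) :
    sortedEig hH ⟨1, by omega⟩ ≤
      (q : ℝ) * wmax *
        ((X₃.card : ℝ) ^ 2 * (X₂.card : ℝ) + (X₁.card : ℝ) ^ 2 * (X₂.card : ℝ)) /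
        ((X₃.card : ℝ) ^ 2 * (X₁.card : ℝ) + (X₁.card : ℝ) ^ 2 * (X₃.card : ℝ)) := by
  classical
  set N₁ : ℝ := (X₁.card : ℝ) with hNN1
  set N₂ : ℝ := (X₂.card : ℝ) with hNN2
  set N₃ : ℝ := (X₃.card : ℝ) with hNN3
  have hN1R : 0 < N₁ := by rw [hNN1]; exact_mod_cast hN1
  have hN2R : 0 < N₂ := by rw [hNN2]; exact_mod_cast hN2
  have hN3R : 0 < N₃ := by rw [hNN3]; exact_mod_cast hN3
  have hwmax0 : 0 ≤ wmax := le_trans (hnn ⟨0, by omega⟩ ⟨0, by omega⟩) (hwmax _ _)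
  -- test vector
  set V : Fin N → ℝ := fun i => if i ∈ X₁ then N₃ else if i ∈ X₃ then -N₁ else 0 with hV
  have hV1 : ∀ i ∈ X₁, V i = N₃ := fun i hi => by rw [hV]; simp [hi]
  have hV2 : ∀ i ∈ X₂, V i = 0 := fun i hi => by
    rw [hV]
    simp [Finset.disjoint_right.mp h12 hi, Finset.disjoint_left.mp h23 hi]
  have hV3 : ∀ i ∈ X₃, V i = -N₁ := fun i hi => by
    rw [hV]
    simp [Finset.disjoint_right.mp h13 hi, hi]
  -- splitting sums over the partition
  have hdisj : Disjoint (X₁ ∪ X₂) X₃ := Finset.disjoint_union_left.mpr ⟨h13, h23⟩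
  have hsplit : ∀ f : Fin N → ℝ,
      ∑ i, f i = ∑ i ∈ X₁, f i + ∑ i ∈ X₂, f i + ∑ i ∈ X₃, f i := by
    intro f
    rw [← Finset.sum_union h12, ← Finset.sum_union hdisj, hcover]
  have hVsum : ∑ i, V i = 0 := by
    have e1 : ∑ i ∈ X₁, V i = ∑ i ∈ X₁, N₃ := Finset.sum_congr rfl fun i hi => hV1 i hi
    have e2 : ∑ i ∈ X₂, V i = ∑ i ∈ X₂, (0:ℝ) := Finset.sum_congr rfl fun i hi => hV2 i hi
    have e3 : ∑ i ∈ X₃, V i = ∑ i ∈ X₃, -N₁ := Finset.sum_congr rfl fun i hi => hV3 i hi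
    rw [hsplit V, e1, e2, e3]
    simp [Finset.sum_const, nsmul_eq_mul, ← hNN1, ← hNN3]
    ring
  have hVV : V ⬝ᵥ V = N₃^2 * N₁ + N₁^2 * N₃ := by
    unfold dotProduct
    have e1 : ∑ i ∈ X₁, V i * V i = ∑ i ∈ X₁, N₃ * N₃ :=
      Finset.sum_congr rfl fun i hi => by rw [hV1 i hi]
    have e2 : ∑ i ∈ X₂, V i * V i = ∑ i ∈ X₂, (0:ℝ) :=
      Finset.sum_congr rfl fun i hi => by rw [hV2 i hi]; ring
    have e3 : ∑ i ∈ X₃, V i * V i = ∑ i ∈ X₃, N₁ * N₁ :=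
      Finset.sum_congr rfl fun i hi => by rw [hV3 i hi]; ring
    rw [hsplit (fun i => V i * V i), e1, e2, e3]
    simp [Finset.sum_const, nsmul_eq_mul, ← hNN1, ← hNN3]
    ring
  -- row sum bound
  have hrow : ∀ i, ∑ j, w i j ≤ (q:ℝ) * wmax := by
    intro i
    rw [← Finset.sum_filter_ne_zero Finset.univ (f := w i)]
    calc ∑ j ∈ Finset.univ.filter (fun j => w i j ≠ 0), w i j
        ≤ (Finset.univ.filter (fun j => w i j ≠ 0)).card • wmax :=
          Finset.sum_le_card_nsmul _ _ _ (fun j _ => hwmax i j)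
      _ = ((Finset.univ.filter (fun j => w i j ≠ 0)).card : ℝ) * wmax := by
          rw [nsmul_eq_mul]
      _ ≤ (q:ℝ) * wmax := by
          apply mul_le_mul_of_nonneg_right _ hwmax0
          exact_mod_cast hdeg i
  -- quadratic form computation
  have hQ : V ⬝ᵥ (lap w *ᵥ V) ≤ (q:ℝ) * wmax * (N₃^2 * N₂ + N₁^2 * N₂) := by
    rw [quad_form w hdiag V]
    have hinner1 : ∀ i ∈ X₁, ∑ j, w i j * (V i * (V i - V j)) = ∑ j ∈ X₂, w i j * N₃^2 := by
      intro i hi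
      have e1 : ∑ j ∈ X₁, w i j * (V i * (V i - V j)) = ∑ j ∈ X₁, (0:ℝ) :=
        Finset.sum_congr rfl fun j hj => by rw [hV1 i hi, hV1 j hj]; ring
      have e2 : ∑ j ∈ X₂, w i j * (V i * (V i - V j)) = ∑ j ∈ X₂, w i j * N₃^2 :=
        Finset.sum_congr rfl fun j hj => by rw [hV1 i hi, hV2 j hj]; ring
      have e3 : ∑ j ∈ X₃, w i j * (V i * (V i - V j)) = ∑ j ∈ X₃, (0:ℝ) :=
        Finset.sum_congr rfl fun j hj => by rw [hnoedge i hi j hj]; ring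
      rw [hsplit (fun j => w i j * (V i * (V i - V j))), e1, e2, e3]
      simp only [Finset.sum_const_zero, zero_add, add_zero]
    have hinner3 : ∀ i ∈ X₃, ∑ j, w i j * (V i * (V i - V j)) = ∑ j ∈ X₂, w i j * N₁^2 := by
      intro i hi
      have e1 : ∑ j ∈ X₁, w i j * (V i * (V i - V j)) = ∑ j ∈ X₁, (0:ℝ) :=
        Finset.sum_congr rfl fun j hj => by rw [hsym i j, hnoedge j hj i hi]; ring
      have e2 : ∑ j ∈ X₂, w i j * (V i * (V i - V j)) = ∑ j ∈ X₂, w i j * N₁^2 :=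
        Finset.sum_congr rfl fun j hj => by rw [hV3 i hi, hV2 j hj]; ring
      have e3 : ∑ j ∈ X₃, w i j * (V i * (V i - V j)) = ∑ j ∈ X₃, (0:ℝ) :=
        Finset.sum_congr rfl fun j hj => by rw [hV3 i hi, hV3 j hj]; ring
      rw [hsplit (fun j => w i j * (V i * (V i - V j))), e1, e2, e3]
      simp only [Finset.sum_const_zero, zero_add, add_zero]
    have f1 : ∑ i ∈ X₁, ∑ j, w i j * (V i * (V i - V j)) = ∑ i ∈ X₁, ∑ j ∈ X₂, w i j * N₃^2 :=
      Finset.sum_congr rfl hinner1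
    have f2 : ∑ i ∈ X₂, ∑ j, w i j * (V i * (V i - V j)) = ∑ i ∈ X₂, (0:ℝ) :=
      Finset.sum_congr rfl fun i hi => Finset.sum_eq_zero fun j _ => by rw [hV2 i hi]; ring
    have f3 : ∑ i ∈ X₃, ∑ j, w i j * (V i * (V i - V j)) = ∑ i ∈ X₃, ∑ j ∈ X₂, w i j * N₁^2 :=
      Finset.sum_congr rfl hinner3
    rw [hsplit (fun i => ∑ j, w i j * (V i * (V i - V j))), f1, f2, f3]
    simp only [Finset.sum_const_zero, add_zero]
    have hcross : ∀ X : Finset (Fin N), ∑ i ∈ X, ∑ j ∈ X₂, w i j ≤ N₂ * ((q:ℝ)*wmax) := by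
      intro X
      rw [Finset.sum_comm]
      calc ∑ j ∈ X₂, ∑ i ∈ X, w i j ≤ ∑ j ∈ X₂, (q:ℝ)*wmax := by
            refine Finset.sum_le_sum fun j hj => ?_
            calc ∑ i ∈ X, w i j = ∑ i ∈ X, w j i := Finset.sum_congr rfl fun i _ => hsym i j
              _ ≤ ∑ i, w j i := Finset.sum_le_sum_of_subset_of_nonneg
                  (Finset.subset_univ X) (fun i _ _ => hnn j i)
              _ ≤ (q:ℝ)*wmax := hrow j
        _ = N₂ * ((q:ℝ)*wmax) := by rw [Finset.sum_const, nsmul_eq_mul, hNN2]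
    have g1 : ∑ i ∈ X₁, ∑ j ∈ X₂, w i j * N₃^2 = (∑ i ∈ X₁, ∑ j ∈ X₂, w i j) * N₃^2 := by
      simp only [← Finset.sum_mul]
    have g3 : ∑ i ∈ X₃, ∑ j ∈ X₂, w i j * N₁^2 = (∑ i ∈ X₃, ∑ j ∈ X₂, w i j) * N₁^2 := by
      simp only [← Finset.sum_mul]
    rw [g1, g3]
    have b1 := mul_le_mul_of_nonneg_right (hcross X₁) (sq_nonneg N₃)
    have b3 := mul_le_mul_of_nonneg_right (hcross X₃) (sq_nonneg N₁)
    nlinarith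
  -- final assembly
  have hL1 := lap_one w hdiag
  rcases spectral hN hH V hVsum hL1 with hle | hineq
  · refine hle.trans ?_
    apply div_nonneg
    · apply mul_nonneg (mul_nonneg (by positivity) hwmax0)
      positivity
    · positivity
  · rw [hVV] at hineq
    have hD : (0:ℝ) < N₃^2*N₁ + N₁^2*N₃ := by positivity
    exact (le_div_iff₀ hD).mpr (hineq.trans hQ)
end

section
/- Let L be the weighted Laplacian of a weighted undirected graph on N ≥ 2 vertices, and let L̄ be the grounded Laplacian obtained by deleting the row and column of L corresponding to vertex 1. Then the smallest eigenvalue λ̄₁ of L̄ satisfies λ̄₁ ≤ (Σ_{k ∈ N(1)} w_{1k})/(N−1), the total weight of edges incident to vertex 1 divided by N−1. -/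
open Matrix

/-- Rayleigh: smallest sorted eigenvalue times ‖x‖² is at most xᵀ A x. -/
lemma rayleigh_min {N : ℕ} {A : Matrix (Fin N) (Fin N) ℝ} (hA : A.IsHermitian)
    (h0 : 0 < N) (x : Fin N → ℝ) :
    sortedEig hA ⟨0, h0⟩ * (x ⬝ᵥ x) ≤ x ⬝ᵥ (A *ᵥ x) := by
  classical
  set U : Matrix (Fin N) (Fin N) ℝ := (hA.eigenvectorUnitary : Matrix (Fin N) (Fin N) ℝ)
  have hstar : star U = Uᵀ := by
    ext i j; simp [Matrix.conjTranspose_apply]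
  set y : Fin N → ℝ := Uᵀ *ᵥ x with hy
  have hspec : A = U * Matrix.diagonal hA.eigenvalues * Uᵀ := by
    have := hA.spectral_theorem
    rw [← hstar]
    simpa [Function.comp] using this
  have hAx : x ⬝ᵥ (A *ᵥ x) = ∑ i, hA.eigenvalues i * (y i)^2 := by
    conv_lhs => rw [hspec]
    rw [← Matrix.mulVec_mulVec, ← Matrix.mulVec_mulVec, Matrix.dotProduct_mulVec,
      ← Matrix.mulVec_transpose]
    simp only [dotProduct, Matrix.mulVec_diagonal, sq, y]
    exact Finset.sum_congr rfl fun i _ => by ring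
  have hsum : x ⬝ᵥ x = ∑ i, (y i)^2 := by
    have hUU : U * Uᵀ = 1 := by
      rw [← hstar]; exact Matrix.mem_unitaryGroup_iff.mp hA.eigenvectorUnitary.2
    have : x ⬝ᵥ ((U * Uᵀ) *ᵥ x) = ∑ i, (y i)^2 := by
      rw [← Matrix.mulVec_mulVec, Matrix.dotProduct_mulVec, ← Matrix.mulVec_transpose]
      simp [dotProduct, sq, y]
    rw [hUU] at this
    simpa using this
  have hmin : ∀ j, sortedEig hA ⟨0, h0⟩ ≤ hA.eigenvalues j := by
    intro j
    have hmono := Tuple.monotone_sort hA.eigenvalues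
      (a := ⟨0, h0⟩) (b := (Tuple.sort hA.eigenvalues)⁻¹ j) (Fin.mk_le_of_le_val (Nat.zero_le _))
    simpa [sortedEig, Function.comp] using hmono
  rw [hAx, hsum, Finset.mul_sum]
  exact Finset.sum_le_sum fun j _ => mul_le_mul_of_nonneg_right (hmin j) (sq_nonneg _)

/-- The smallest eigenvalue of the grounded Laplacian (vertex 0 removed) is at
most the total weight of the edges incident to the grounded vertex divided by
N − 1. Here the graph has N = M + 1 ≥ 2 vertices. -/
theorem stmt4 {M : ℕ} (hM : 1 ≤ M)
    (w : Fin (M + 1) → Fin (M + 1) → ℝ)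
    (hsym : ∀ i j, w i j = w j i) (hnn : ∀ i j, 0 ≤ w i j)
    (hdiag : ∀ i, w i i = 0)
    (hH : ((lap w).submatrix Fin.succ Fin.succ).IsHermitian) :
    sortedEig hH ⟨0, by omega⟩ ≤ (∑ k, w 0 k) / (M : ℝ) := by
  have h0 : 0 < M := hM
  set A := (lap w).submatrix Fin.succ Fin.succ with hAdef
  set x : Fin M → ℝ := fun _ => 1 with hx
  have hray := rayleigh_min hH h0 x
  have hxx : x ⬝ᵥ x = (M : ℝ) := by simp [x, dotProduct]
  have hAx : x ⬝ᵥ (A *ᵥ x) = ∑ k, w 0 k := by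
    have hrow : ∀ i : Fin M, ∑ j, A i j = w 0 (i.succ) := by
      intro i
      have : ∑ j : Fin M, A i j
          = ∑ j : Fin M, (if (i.succ : Fin (M+1)) = j.succ then ∑ k, w i.succ k
              else - w i.succ j.succ) := by
        apply Finset.sum_congr rfl
        intro j _
        simp [A, lap, Matrix.submatrix_apply]
      rw [this]
      have hsplit : ∑ k : Fin (M+1), w i.succ k
          = w i.succ 0 + ∑ j : Fin M, w i.succ j.succ := Fin.sum_univ_succ _
      have : ∑ j : Fin M, (if (i.succ : Fin (M+1)) = j.succ then ∑ k, w i.succ k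
              else - w i.succ j.succ)
          = ∑ j : Fin M, ((if i = j then ∑ k, w i.succ k else 0) - w i.succ j.succ) := by
        apply Finset.sum_congr rfl
        intro j _
        by_cases h : i = j
        · subst h; simp [hdiag]
        · simp [h, fun hh => h (Fin.succ_injective _ hh)]
      rw [this, Finset.sum_sub_distrib, Finset.sum_ite_eq, if_pos (Finset.mem_univ i),
        hsplit, hsym i.succ 0]
      ring
    have : x ⬝ᵥ (A *ᵥ x) = ∑ i : Fin M, ∑ j : Fin M, A i j := by
      simp [dotProduct, Matrix.mulVec, x]
    rw [this]
    have : ∑ i : Fin M, ∑ j : Fin M, A i j = ∑ i : Fin M, w 0 i.succ := by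
      exact Finset.sum_congr rfl fun i _ => hrow i
    rw [this, Fin.sum_univ_succ (fun k => w 0 k), hdiag 0, zero_add]
  rw [hxx, hAx] at hray
  rw [le_div_iff₀ (by exact_mod_cast h0)]
  exact hray
end

section
/- Let {G_N} be a family of connected weighted undirected graphs with degrees at most q and edge weights at most w_max, and fix gains a₀, a₁, a₂ > 0. For the grounded (leader-follower) third-order consensus dynamics over G_N, stability requires λ̄₁(G_N) > a₀/(a₁a₂). Since λ̄₁(G_N) ≤ q·w_max/(N−1), the grounded system is unstable for all N > 1 + q·w_max·a₁a₂/a₀. -/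
open Matrix

/-- The closed-loop matrix A = [[0, I, 0], [0, 0, I], [−a₀L, −a₁L, −a₂L]] of
third-order consensus, indexed by Fin 3 × Fin N. -/
noncomputable def thirdA {N : ℕ} (a₀ a₁ a₂ : ℝ) (L : Matrix (Fin N) (Fin N) ℝ) :
    Matrix (Fin 3 × Fin N) (Fin 3 × Fin N) ℝ :=
  Matrix.of fun p q =>
    if p.1 = 0 ∧ q.1 = 1 then (if p.2 = q.2 then 1 else 0)
    else if p.1 = 1 ∧ q.1 = 2 then (if p.2 = q.2 then 1 else 0)
    else if p.1 = 2 ∧ q.1 = 0 then -a₀ * L p.2 q.2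
    else if p.1 = 2 ∧ q.1 = 1 then -a₁ * L p.2 q.2
    else if p.1 = 2 ∧ q.1 = 2 then -a₂ * L p.2 q.2
    else 0

/-- Every real cubic has a real root (intermediate value theorem). -/
lemma cubic_real_root (b c d : ℝ) : ∃ r : ℝ, r^3 + b*r^2 + c*r + d = 0 := by
  set K : ℝ := 1 + |b| + |c| + |d| with hK
  have hb := abs_nonneg b; have hc := abs_nonneg c; have hd := abs_nonneg d
  have hK1 : 1 ≤ K := by simp only [hK]; linarith
  have hb1 := neg_abs_le b; have hb2 := le_abs_self b
  have hc1 := neg_abs_le c; have hc2 := le_abs_self c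
  have hd1 := neg_abs_le d; have hd2 := le_abs_self d
  have hcont : ContinuousOn (fun x : ℝ => x^3 + b*x^2 + c*x + d) (Set.Icc (-K) K) := by
    fun_prop
  have hmem : (0:ℝ) ∈ Set.Icc ((-K)^3 + b*(-K)^2 + c*(-K) + d) (K^3 + b*K^2 + c*K + d) := by
    constructor <;> nlinarith [sq_nonneg K, sq_nonneg (K-1)]
  have := intermediate_value_Icc (by linarith : (-K:ℝ) ≤ K) hcont hmem
  obtain ⟨r, _, hr⟩ := this
  exact ⟨r, hr⟩

/-- Routh–Hurwitz violation for a cubic: if `b ≤ 0` or `b*c ≤ d`, the cubic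
`s³ + b s² + c s + d` has a complex root with nonnegative real part. -/
lemma cubic_unstable (b c d : ℝ) (h : b ≤ 0 ∨ b*c ≤ d) :
    ∃ s : ℂ, s^3 + (b:ℂ)*s^2 + (c:ℂ)*s + (d:ℂ) = 0 ∧ 0 ≤ s.re := by
  by_contra hcon
  push_neg at hcon
  obtain ⟨r, hr⟩ := cubic_real_root b c d
  have hrC : ((r:ℂ))^3 + (b:ℂ)*(r:ℂ)^2 + (c:ℂ)*(r:ℂ) + (d:ℂ) = 0 := by
    exact_mod_cast hr
  have hrneg : r < 0 := by simpa using hcon (r:ℂ) hrC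
  set β : ℝ := b + r with hβdef
  set γ : ℝ := c + b*r + r^2 with hγdef
  have hd : d = -(r*γ) := by rw [hγdef]; nlinarith [hr]
  have key : 0 < β ∧ 0 < γ := by
    rcases lt_or_ge (β^2 - 4*γ) 0 with hΔ | hΔ
    · set t : ℝ := Real.sqrt (4*γ - β^2) / 2 with htdef
      have ht2 : t^2 = γ - β^2/4 := by
        rw [htdef, div_pow, Real.sq_sqrt (by linarith)]; ring
      set s : ℂ := (↑(-β/2) : ℂ) + (t:ℝ) * Complex.I with hsdef
      have hquad : s^2 + (β:ℂ)*s + (γ:ℂ) = 0 := by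
        have hI : Complex.I^2 = -1 := Complex.I_sq
        have : s^2 + (β:ℂ)*s + (γ:ℂ) = ((t:ℝ):ℂ)^2 * Complex.I^2 + ((γ:ℝ):ℂ) - ((β:ℝ):ℂ)^2/4 := by
          rw [hsdef]; push_cast; ring
        rw [this, hI]
        have : ((t:ℝ):ℂ)^2 = ((γ:ℝ):ℂ) - ((β:ℝ):ℂ)^2/4 := by
          rw [show ((t:ℝ):ℂ)^2 = ((t^2 : ℝ) : ℂ) by push_cast; ring, ht2]; push_cast; ring
        rw [this]; ring
      have hroot : s^3 + (b:ℂ)*s^2 + (c:ℂ)*s + (d:ℂ) = 0 := by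
        have hb' : (b:ℂ) = (β:ℂ) - (r:ℂ) := by push_cast [hβdef]; ring
        have hc' : (c:ℂ) = (γ:ℂ) - (b:ℂ)*(r:ℂ) - (r:ℂ)^2 := by push_cast [hγdef]; ring
        have hd' : (d:ℂ) = -((r:ℂ)*(γ:ℂ)) := by push_cast [hd]; ring
        calc s^3 + (b:ℂ)*s^2 + (c:ℂ)*s + (d:ℂ)
            = (s - (r:ℂ)) * (s^2 + (β:ℂ)*s + (γ:ℂ)) := by
              rw [hb', hc', hd']; push_cast [hβdef]; ring
          _ = 0 := by rw [hquad]; ring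
      have hre : s.re = -β/2 := by simp [hsdef]
      have := hcon s hroot
      rw [hre] at this
      have hβpos : 0 < β := by linarith
      exact ⟨hβpos, by nlinarith⟩
    · have hΔ' : 0 ≤ β^2 - 4*γ := by linarith
      set D : ℝ := Real.sqrt (β^2 - 4*γ) with hDdef
      have hD2 : D^2 = β^2 - 4*γ := Real.sq_sqrt hΔ'
      have root2 : ∀ e : ℝ, e = (-β + D)/2 ∨ e = (-β - D)/2 → e < 0 := by
        intro e he
        have hq : e^2 + β*e + γ = 0 := by
          rcases he with he | he <;> rw [he] <;> linear_combination hD2/4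
        have heC : ((e:ℂ))^3 + (b:ℂ)*((e:ℂ))^2 + (c:ℂ)*(e:ℂ) + (d:ℂ) = 0 := by
          have : e^3 + b*e^2 + c*e + d = (e - r) * (e^2 + β*e + γ) := by
            rw [hβdef, hγdef, hd]; ring
          rw [hq, mul_zero] at this
          exact_mod_cast this
        simpa using hcon (e:ℂ) heC
      have h2 := root2 _ (Or.inl rfl)
      have h3 := root2 _ (Or.inr rfl)
      have hDnn : 0 ≤ D := Real.sqrt_nonneg _
      exact ⟨by linarith, by nlinarith⟩
  obtain ⟨hβ, hγ⟩ := key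
  have hb' : 0 < b + r := by rw [hβdef] at hβ; exact hβ
  have hc' : 0 < c + r^2 := by nlinarith
  rcases h with h | h
  · linarith
  · nlinarith [mul_pos hb' hc', hr]

/-- A root of the characteristic cubic at an eigenvalue of `L` lies in the
spectrum of the closed-loop matrix. -/
lemma mem_spec_thirdA {M : ℕ} (a₀ a₁ a₂ : ℝ) (L : Matrix (Fin M) (Fin M) ℝ)
    (lam : ℝ) (u : Fin M → ℝ) (hu : u ≠ 0) (huv : L *ᵥ u = lam • u)
    (s : ℂ) (hs : s^3 + (a₂*lam : ℝ)*s^2 + (a₁*lam : ℝ)*s + (a₀*lam : ℝ) = 0) :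
    s ∈ spectrum ℂ ((thirdA a₀ a₁ a₂ L).map (Complex.ofReal ·)) := by
  rw [spectrum.mem_iff]
  set A := (thirdA a₀ a₁ a₂ L).map (Complex.ofReal ·) with hA
  intro hunit
  rw [Matrix.isUnit_iff_isUnit_det, isUnit_iff_ne_zero] at hunit
  apply hunit
  rw [← Matrix.exists_mulVec_eq_zero_iff]
  obtain ⟨j₀, hj₀⟩ := Function.ne_iff.mp hu
  refine ⟨fun p => s^(p.1 : ℕ) * (u p.2 : ℂ), ?_, ?_⟩
  · intro h0
    apply hj₀
    have := congrFun h0 (0, j₀)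
    simp at this
    exact_mod_cast this
  · have huvC : ∀ j, (∑ l, (L j l : ℂ) * (u l : ℂ)) = (lam : ℝ) * (u j : ℂ) := by
      intro j
      have := congrFun huv j
      simp [Matrix.mulVec, dotProduct] at this
      exact_mod_cast this
    funext p
    obtain ⟨i, j⟩ := p
    simp only [Matrix.mulVec, dotProduct, Matrix.sub_apply, Matrix.algebraMap_matrix_apply,
      Fintype.sum_prod_type, hA, Matrix.map_apply, thirdA, Matrix.of_apply, Pi.zero_apply]
    push_cast at hs
    fin_cases i
    · simp [Fin.sum_univ_three, sub_mul, ite_mul, Finset.sum_sub_distrib, Finset.sum_ite_eq,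
        Finset.mul_sum, apply_ite (Complex.ofReal ·)]
    · simp [Fin.sum_univ_three, sub_mul, ite_mul, Finset.sum_sub_distrib, Finset.sum_ite_eq,
        Finset.mul_sum, apply_ite (Complex.ofReal ·)]
      ring
    · simp [Fin.sum_univ_three, sub_mul, ite_mul, Finset.sum_sub_distrib, Finset.sum_ite_eq,
        Finset.mul_sum, apply_ite (Complex.ofReal ·)]
      have e0 : ∑ x, (a₀:ℂ) * (L j x : ℂ) * (u x : ℂ) = (a₀:ℂ) * ((lam:ℂ) * (u j : ℂ)) := by
        simp_rw [mul_assoc, ← Finset.mul_sum]; rw [huvC j]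
      have e1 : ∑ x, (a₁:ℂ) * (L j x : ℂ) * (s * (u x : ℂ))
          = (a₁:ℂ) * s * ((lam:ℂ) * (u j : ℂ)) := by
        simp_rw [show ∀ x : Fin M, (a₁:ℂ) * (L j x : ℂ) * (s * (u x : ℂ))
            = (a₁:ℂ) * s * ((L j x : ℂ) * (u x : ℂ)) from fun x => by ring,
          ← Finset.mul_sum]
        rw [huvC j]
      have e2 : ∑ x, (a₂:ℂ) * (L j x : ℂ) * (s^2 * (u x : ℂ))
          = (a₂:ℂ) * s^2 * ((lam:ℂ) * (u j : ℂ)) := by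
        simp_rw [show ∀ x : Fin M, (a₂:ℂ) * (L j x : ℂ) * (s^2 * (u x : ℂ))
            = (a₂:ℂ) * s^2 * ((L j x : ℂ) * (u x : ℂ)) from fun x => by ring,
          ← Finset.mul_sum]
        rw [huvC j]
      rw [e0, e1, e2]
      linear_combination ((u j : ℝ) : ℂ) * hs

/-- Rayleigh bound: the smallest eigenvalue bounds the quadratic form below. -/
lemma rayleigh_min_s15 {M : ℕ} {L : Matrix (Fin M) (Fin M) ℝ} (hL : L.IsHermitian)
    (lam : ℝ) (hmin : ∀ i, lam ≤ hL.eigenvalues i) (x : Fin M → ℝ) :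
    lam * (x ⬝ᵥ x) ≤ x ⬝ᵥ (L *ᵥ x) := by
  classical
  set U : Matrix (Fin M) (Fin M) ℝ := (hL.eigenvectorUnitary : Matrix (Fin M) (Fin M) ℝ) with hU
  have hspec := hL.spectral_theorem
  set d : Fin M → ℝ := RCLike.ofReal ∘ hL.eigenvalues with hd
  have hdi : ∀ i, d i = hL.eigenvalues i := fun i => rfl
  set y : Fin M → ℝ := x ᵥ* U with hy
  have hUU : U * star U = 1 := (Matrix.mem_unitaryGroup_iff).mp hL.eigenvectorUnitary.2
  have hyy : y ⬝ᵥ y = x ⬝ᵥ x := by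
    rw [hy, show (x ᵥ* U) = Uᵀ *ᵥ x from (Matrix.mulVec_transpose U x).symm]
    rw [Matrix.dotProduct_mulVec, Matrix.vecMul_transpose, Matrix.mulVec_mulVec]
    rw [show U * Uᵀ = 1 from hUU, Matrix.one_mulVec]
  have hmid : x ⬝ᵥ (L *ᵥ x) = y ⬝ᵥ ((Matrix.diagonal d) *ᵥ y) := by
    conv_lhs => rw [hspec]
    rw [Unitary.conjStarAlgAut_apply]
    rw [← hU, show star U = Uᵀ from rfl]
    rw [← Matrix.mulVec_mulVec, ← Matrix.mulVec_mulVec, Matrix.dotProduct_mulVec,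
      Matrix.mulVec_transpose]
  rw [hmid]
  have hdv : (Matrix.diagonal d) *ᵥ y = fun i => d i * y i := by
    funext i; rw [Matrix.mulVec_diagonal]
  rw [hdv]
  have : lam * (y ⬝ᵥ y) ≤ y ⬝ᵥ (fun i => d i * y i) := by
    rw [dotProduct, dotProduct, Finset.mul_sum]
    apply Finset.sum_le_sum
    intro i _
    have := hmin i
    rw [hdi i] at *
    nlinarith [sq_nonneg (y i), hmin i]
  calc lam * (x ⬝ᵥ x) = lam * (y ⬝ᵥ y) := by rw [hyy]
    _ ≤ _ := this

/-- The bottom sorted eigenvalue is a lower bound for all eigenvalues. -/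
lemma sortedEig_min {N : ℕ} {L : Matrix (Fin N) (Fin N) ℝ} (hL : L.IsHermitian)
    (hN : 1 ≤ N) (i : Fin N) : sortedEig hL ⟨0, hN⟩ ≤ hL.eigenvalues i := by
  have hmono := Tuple.monotone_sort hL.eigenvalues
  have h1 : hL.eigenvalues i
      = (hL.eigenvalues ∘ Tuple.sort hL.eigenvalues) ((Tuple.sort hL.eigenvalues).symm i) := by
    simp
  rw [h1]
  exact hmono (by simp [Fin.le_def])

/-- Existence of a (plain-function) eigenvector for each eigenvalue. -/
lemma eigvec_exists {N : ℕ} {L : Matrix (Fin N) (Fin N) ℝ} (hL : L.IsHermitian) (i : Fin N) :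
    ∃ u : Fin N → ℝ, u ≠ 0 ∧ L *ᵥ u = hL.eigenvalues i • u := by
  refine ⟨⇑(hL.eigenvectorBasis i), ?_, hL.mulVec_eigenvectorBasis i⟩
  intro h
  have h0 : hL.eigenvectorBasis i = 0 := by
    apply (WithLp.equiv 2 _).injective
    simpa using h
  exact hL.eigenvectorBasis.toBasis.ne_zero i (by simpa using h0)

/-- Grounded third-order consensus over a connected bounded-degree graph on
N = M + 1 vertices (degrees ≤ q, weights ≤ w_max, vertex 0 grounded):
stability requires λ̄₁ > a₀/(a₁a₂), and since λ̄₁ ≤ q·w_max/(N−1), the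
grounded system is unstable whenever N > 1 + q·w_max·a₁a₂/a₀. -/
theorem stmt15 {M q : ℕ} (hM : 1 ≤ M) (wmax : ℝ)
    (w : Fin (M + 1) → Fin (M + 1) → ℝ)
    (hsym : ∀ i j, w i j = w j i) (hnn : ∀ i j, 0 ≤ w i j)
    (hdiag : ∀ i, w i i = 0)
    (hwmax : ∀ i j, w i j ≤ wmax)
    (hdeg : ∀ i, (Finset.univ.filter fun j => w i j ≠ 0).card ≤ q)
    (hconn : (⟨fun i j => i ≠ j ∧ w i j ≠ 0,
        ⟨fun i j h => ⟨h.1.symm, fun hz => h.2 ((hsym i j).trans hz)⟩⟩,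
        ⟨fun i h => h.1 rfl⟩⟩ : SimpleGraph (Fin (M + 1))).Connected)
    (hHg : ((lap w).submatrix Fin.succ Fin.succ).IsHermitian)
    (a₀ a₁ a₂ : ℝ) (ha₀ : 0 < a₀) (ha₁ : 0 < a₁) (ha₂ : 0 < a₂) :
    ((∀ s ∈ spectrum ℂ
        ((thirdA a₀ a₁ a₂ ((lap w).submatrix Fin.succ Fin.succ)).map (Complex.ofReal ·)),
        s.re < 0) →
      a₀ / (a₁ * a₂) < sortedEig hHg ⟨0, hM⟩) ∧
    (((M : ℝ) + 1 > 1 + (q : ℝ) * wmax * a₁ * a₂ / a₀) →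
      ¬ (∀ s ∈ spectrum ℂ
          ((thirdA a₀ a₁ a₂ ((lap w).submatrix Fin.succ Fin.succ)).map (Complex.ofReal ·)),
          s.re < 0)) := by
  classical
  set lm : ℝ := sortedEig hHg ⟨0, hM⟩ with hlm
  have key : (∀ s ∈ spectrum ℂ
      ((thirdA a₀ a₁ a₂ ((lap w).submatrix Fin.succ Fin.succ)).map (Complex.ofReal ·)),
      s.re < 0) → a₀ / (a₁ * a₂) < lm := by
    intro hstab
    by_contra hle
    push_neg at hle
    obtain ⟨u, hu, huv⟩ := eigvec_exists hHg (Tuple.sort hHg.eigenvalues ⟨0, hM⟩)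
    have hlam : hHg.eigenvalues (Tuple.sort hHg.eigenvalues ⟨0, hM⟩) = lm := rfl
    rw [hlam] at huv
    have hdis : (a₂*lm) ≤ 0 ∨ (a₂*lm)*(a₁*lm) ≤ (a₀*lm) := by
      rcases le_or_gt lm 0 with h | h
      · left; nlinarith
      · right
        have : lm * (a₁ * a₂) ≤ a₀ := (le_div_iff₀ (mul_pos ha₁ ha₂)).mp hle
        nlinarith
    obtain ⟨s, hs, hsre⟩ := cubic_unstable (a₂*lm) (a₁*lm) (a₀*lm) hdis
    have hmem := mem_spec_thirdA a₀ a₁ a₂ _ lm u hu huv s hs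
    exact absurd (hstab s hmem) (not_lt.mpr hsre)
  refine ⟨key, ?_⟩
  intro hN hstab
  have hlt := key hstab
  -- Rayleigh bound with the all-ones vector
  have hmin := fun i => sortedEig_min hHg hM i
  have hray := rayleigh_min_s15 hHg lm hmin (fun _ => (1:ℝ))
  have hxx : (fun _ : Fin M => (1:ℝ)) ⬝ᵥ (fun _ => (1:ℝ)) = (M:ℝ) := by
    simp [dotProduct]
  -- compute the quadratic form: row sums of the grounded Laplacian
  have row : ∀ i : Fin M, (∑ j, (lap w).submatrix Fin.succ Fin.succ i j) = w i.succ 0 := by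
    intro i
    have hterm : ∀ j : Fin M, (lap w).submatrix Fin.succ Fin.succ i j
        = if i = j then (∑ k, w i.succ k) else -(w i.succ j.succ) := by
      intro j
      simp only [Matrix.submatrix_apply, lap, Matrix.of_apply, Fin.succ_inj]
    simp_rw [hterm]
    rw [← Finset.add_sum_erase _ _ (Finset.mem_univ i)]
    rw [if_pos rfl]
    have h2 : ∑ j ∈ Finset.univ.erase i, (if i = j then (∑ k, w i.succ k) else -(w i.succ j.succ))
        = ∑ j ∈ Finset.univ.erase i, -(w i.succ j.succ) := by
      apply Finset.sum_congr rfl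
      intro j hj
      rw [if_neg (Ne.symm (Finset.ne_of_mem_erase hj))]
    rw [h2, Finset.sum_erase_eq_sub (Finset.mem_univ i)]
    rw [Fin.sum_univ_succ]
    simp [hdiag]
  have hform : (fun _ : Fin M => (1:ℝ)) ⬝ᵥ
      (((lap w).submatrix Fin.succ Fin.succ) *ᵥ (fun _ => (1:ℝ))) = ∑ i : Fin M, w i.succ 0 := by
    simp only [dotProduct, Matrix.mulVec, one_mul, mul_one]
    exact Finset.sum_congr rfl fun i _ => row i
  -- bound the total by q * wmax
  have hwm0 : 0 ≤ wmax := le_trans (by rw [hdiag 0]) (hwmax 0 0)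
  have hsum : ∑ i : Fin M, w i.succ 0 ≤ (q:ℝ) * wmax := by
    have h1 : ∑ i : Fin M, w i.succ 0 = ∑ k : Fin (M+1), w 0 k := by
      rw [show ∑ k : Fin (M+1), w 0 k = ∑ k : Fin (M+1), w k 0 from
        Finset.sum_congr rfl fun k _ => hsym 0 k]
      rw [Fin.sum_univ_succ, hdiag 0, zero_add]
    rw [h1]
    have h2 : ∑ k : Fin (M+1), w 0 k
        = ∑ k ∈ Finset.univ.filter (fun j => w 0 j ≠ 0), w 0 k := by
      rw [Finset.sum_filter_ne_zero]
    rw [h2]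
    calc ∑ k ∈ Finset.univ.filter (fun j => w 0 j ≠ 0), w 0 k
        ≤ (Finset.univ.filter (fun j => w 0 j ≠ 0)).card • wmax :=
          Finset.sum_le_card_nsmul _ _ _ (fun x _ => hwmax 0 x)
      _ = ((Finset.univ.filter (fun j => w 0 j ≠ 0)).card : ℝ) * wmax := by
          rw [nsmul_eq_mul]
      _ ≤ (q:ℝ) * wmax := by
          apply mul_le_mul_of_nonneg_right _ hwm0
          exact_mod_cast hdeg 0
  have hlmM : lm * (M:ℝ) ≤ (q:ℝ) * wmax := by
    rw [hxx, hform] at hray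
    linarith
  -- derive the contradiction
  have hρ : 0 < a₀/(a₁*a₂) := div_pos ha₀ (mul_pos ha₁ ha₂)
  have hMgt : (q:ℝ)*wmax*a₁*a₂/a₀ < (M:ℝ) := by linarith
  have e : (a₀/(a₁*a₂)) * ((q:ℝ)*wmax*a₁*a₂/a₀) = (q:ℝ)*wmax := by
    field_simp
  have h2 : (a₀/(a₁*a₂)) * ((q:ℝ)*wmax*a₁*a₂/a₀) < (a₀/(a₁*a₂)) * (M:ℝ) :=
    mul_lt_mul_of_pos_left hMgt hρ
  rw [e] at h2
  have hMpos : (0:ℝ) < (M:ℝ) := by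
    have : (1:ℝ) ≤ (M:ℝ) := by exact_mod_cast hM
    linarith
  have h3 : (a₀/(a₁*a₂)) * (M:ℝ) < lm * (M:ℝ) :=
    mul_lt_mul_of_pos_right hlt hMpos
  linarith
end
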